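/- Fix a positive integer m and let X be a Poisson random variable with mean m. Then P(X ≤ m−1) > P(X ≥ m+1). -/

import Mathlib

open ProbabilityTheory
open scoped NNReal

namespace Stmt6Aux

variable (m : ℕ)

/-- `a m k = m^k / k!`. -/
noncomputable def a (k : ℕ) : ℝ := (m : ℝ) ^ k / (Nat.factorial k)

lemma a_pos (hm : 0 < m) (k : ℕ) : 0 < a m k := by
  unfold a
  have : (0:ℝ) < (m:ℝ) := by exact_mod_cast hm
  positivity

lemma a_succ (k : ℕ) : a m (k + 1) = a m k * ((m : ℝ) / (k + 1)) := by
  unfold a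
  rw [Nat.factorial_succ]
  push_cast
  field_simp
  ring

lemma summable_a : Summable (a m) := Real.summable_pow_div_factorial _

lemma summable_ka : Summable (fun k : ℕ => (k : ℝ) * a m k) := by
  rw [← summable_nat_add_iff 1]
  have : (fun k : ℕ => ((k + 1 : ℕ) : ℝ) * a m (k + 1))
      = fun k : ℕ => (m : ℝ) * a m k := by
    funext k
    rw [a_succ]
    push_cast
    field_simp
  rw [this]
  exact (summable_a m).mul_left _

/-- telescoping: `∑_{k ≤ n} (m - k) a k = m * a n`. -/
lemma telescope (n : ℕ) :
    ∑ k ∈ Finset.range (n + 1), ((m : ℝ) - k) * a m k = (m : ℝ) * a m n := by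
  induction n with
  | zero => simp [a]
  | succ n ih =>
      rw [Finset.sum_range_succ, ih, a_succ]
      have h : ((n:ℝ) + 1) ≠ 0 := by positivity
      push_cast
      field_simp
      ring

lemma hasSum_shift :
    HasSum (fun k : ℕ => ((k : ℝ)) * a m k) ((m : ℝ) * ∑' k, a m k) := by
  have hA : HasSum (a m) (∑' k, a m k) := (summable_a m).hasSum
  have h1 : HasSum (fun k : ℕ => ((k + 1 : ℕ) : ℝ) * a m (k + 1))
      ((m : ℝ) * ∑' k, a m k) := by
    have : (fun k : ℕ => ((k + 1 : ℕ) : ℝ) * a m (k + 1))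
        = fun k : ℕ => (m : ℝ) * a m k := by
      funext k
      rw [a_succ]
      push_cast
      field_simp
    rw [this]
    exact hA.mul_left _
  have h2 := (hasSum_nat_add_iff (f := fun k : ℕ => ((k : ℝ)) * a m k) 1).mp
    (by exact_mod_cast h1)
  simpa using h2

lemma hasSum_c : HasSum (fun k : ℕ => ((m : ℝ) - k) * a m k) 0 := by
  have hA : HasSum (a m) (∑' k, a m k) := (summable_a m).hasSum
  have := (hA.mul_left (m : ℝ)).sub (hasSum_shift m)
  simpa [sub_mul] using this


lemma cast_sub_of_le {k : ℕ} (h : k ≤ m) : ((m - k : ℕ) : ℝ) = (m : ℝ) - k := by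
  push_cast [Nat.cast_sub h]
  ring

lemma a_pred (hm : 0 < m) {k : ℕ} (h : k + 1 ≤ m) :
    a m (m - (k + 1)) = a m (m - k) * (((m : ℝ) - k) / m) := by
  have h1 : m - (k + 1) + 1 = m - k := by omega
  have h2 := a_succ m (m - (k + 1))
  rw [h1] at h2
  have h3 : ((m - (k + 1) : ℕ) : ℝ) + 1 = (m : ℝ) - k := by
    rw [cast_sub_of_le m h]
    push_cast
    ring
  rw [h3] at h2
  have hx : (0:ℝ) < (m:ℝ) := by exact_mod_cast hm
  have hxk : (0:ℝ) < (m:ℝ) - k := by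
    have : (k:ℝ) + 1 ≤ (m:ℝ) := by exact_mod_cast h
    linarith
  rw [h2]
  field_simp

lemma a_plus_succ (k : ℕ) :
    a m (m + (k + 1)) = a m (m + k) * ((m : ℝ) / ((m : ℝ) + k + 1)) := by
  have h2 := a_succ m (m + k)
  have h3 : m + (k + 1) = (m + k) + 1 := by omega
  rw [h3, h2]
  push_cast
  ring_nf

lemma ratio_le (hm : 0 < m) {k : ℕ} (hk : k * (k + 1) ≤ m) (hkm : k + 1 ≤ m) :
    (m : ℝ) / ((m : ℝ) + k + 1) ≤ ((m : ℝ) - k) / m := by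
  have hx : (0:ℝ) < (m:ℝ) := by exact_mod_cast hm
  have hd : (0:ℝ) < (m:ℝ) + k + 1 := by positivity
  have hc : (k : ℝ) * (k + 1) ≤ (m : ℝ) := by exact_mod_cast hk
  rw [div_le_div_iff₀ hd hx]
  nlinarith

lemma mono (hm : 0 < m) : ∀ k, k ≤ m → k * k ≤ m + k → a m (m + k) ≤ a m (m - k) := by
  intro k
  induction k with
  | zero => intro _ _; simp
  | succ k ih =>
      intro hkm hkk
      have hmul : k * (k + 1) ≤ m := by nlinarith
      have ih' : a m (m + k) ≤ a m (m - k) := by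
        apply ih (by omega)
        nlinarith
      have hrat := ratio_le m hm hmul hkm
      have hx : (0:ℝ) < (m:ℝ) := by exact_mod_cast hm
      have hd : (0:ℝ) < (m:ℝ) + k + 1 := by positivity
      calc a m (m + (k + 1)) = a m (m + k) * ((m : ℝ) / ((m : ℝ) + k + 1)) :=
            a_plus_succ m k
        _ ≤ a m (m - k) * ((m : ℝ) / ((m : ℝ) + k + 1)) := by
            apply mul_le_mul_of_nonneg_right ih'
            positivity
        _ ≤ a m (m - k) * (((m : ℝ) - k) / m) := by
            apply mul_le_mul_of_nonneg_left hrat (le_of_lt (a_pos m hm _))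
        _ = a m (m - (k + 1)) := (a_pred m hm hkm).symm

lemma cross (hm : 0 < m) {k : ℕ} (hk1 : 1 ≤ k) (hkm : k + 1 ≤ m)
    (h : a m (m - k) < a m (m + k)) : a m (m - (k + 1)) < a m (m + (k + 1)) := by
  have hnot : ¬ (k * k ≤ m + k) := by
    intro hcon
    exact absurd (mono m hm k (by omega) hcon) (not_le.mpr h)
  have hgt : m + k < k * k := by omega
  have hx : (0:ℝ) < (m:ℝ) := by exact_mod_cast hm
  have hd : (0:ℝ) < (m:ℝ) + k + 1 := by positivity
  have hxk : (0:ℝ) < (m:ℝ) - k := by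
    have : (k:ℝ) + 1 ≤ (m:ℝ) := by exact_mod_cast hkm
    linarith
  have hrat : ((m : ℝ) - k) / m ≤ (m : ℝ) / ((m : ℝ) + k + 1) := by
    have hc : (m : ℝ) + k < (k : ℝ) * k := by exact_mod_cast hgt
    rw [div_le_div_iff₀ hx hd]
    nlinarith
  calc a m (m - (k + 1)) = a m (m - k) * (((m : ℝ) - k) / m) := a_pred m hm hkm
    _ < a m (m + k) * (((m : ℝ) - k) / m) := by
        apply mul_lt_mul_of_pos_right h
        positivity
    _ ≤ a m (m + k) * ((m : ℝ) / ((m : ℝ) + k + 1)) := by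
        apply mul_le_mul_of_nonneg_left hrat (le_of_lt (a_pos m hm _))
    _ = a m (m + (k + 1)) := (a_plus_succ m k).symm

lemma cross_iter (hm : 0 < m) {k : ℕ} (hk1 : 1 ≤ k)
    (h : a m (m - k) < a m (m + k)) :
    ∀ l, k ≤ l → l ≤ m → a m (m - l) < a m (m + l) := by
  intro l
  induction l with
  | zero => omega
  | succ l ih =>
      intro hkl hlm
      rcases Nat.lt_or_ge l k with hlk | hlk
      · have : l + 1 = k := by omega
        rwa [this]
      · exact cross m hm (by omega) hlm (ih hlk (by omega))


set_option maxHeartbeats 2000000 in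
lemma core (hm : 0 < m) :
    ∑' j : ℕ, a m (j + (m + 1)) < ∑ k ∈ Finset.range m, a m k := by
  classical
  have hx : (0:ℝ) < (m:ℝ) := by exact_mod_cast hm
  set A := ∑ k ∈ Finset.range m, a m k with hA_def
  have hB_sum : Summable (fun j : ℕ => a m (j + (m + 1))) :=
    (summable_nat_add_iff (m + 1)).2 (summable_a m)
  set B := ∑' j : ℕ, a m (j + (m + 1)) with hB_def
  -- summability and value of the shifted weighted sum
  have hc := hasSum_c m
  have hcsum : Summable (fun k : ℕ => ((m : ℝ) - k) * a m k) := hc.summable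
  have hcsum' : Summable (fun i : ℕ => ((m : ℝ) - (i + (m+1) : ℕ)) * a m (i + (m+1))) :=
    (summable_nat_add_iff (m + 1)).2 hcsum
  have hsum2 : Summable (fun i : ℕ => ((i : ℝ) + 1) * a m (i + (m + 1))) := by
    have : (fun i : ℕ => ((i : ℝ) + 1) * a m (i + (m + 1)))
        = fun i : ℕ => -(((m : ℝ) - (i + (m+1) : ℕ)) * a m (i + (m+1))) := by
      funext i
      push_cast
      ring
    rw [this]
    exact hcsum'.neg
  have hsplit := Summable.sum_add_tsum_nat_add (m + 1) hcsum
  rw [hc.tsum_eq, telescope m m] at hsplit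
  have hE2 : ∑' i : ℕ, ((i : ℝ) + 1) * a m (i + (m + 1)) = (m : ℝ) * a m m := by
    have h1 : ∑' i : ℕ, ((m : ℝ) - (i + (m+1) : ℕ)) * a m (i + (m+1))
        = ∑' i : ℕ, -(((i : ℝ) + 1) * a m (i + (m + 1))) := by
      congr 1
      funext i
      push_cast
      ring
    rw [h1, tsum_neg] at hsplit
    linarith
  -- the crossing point K
  set S : Finset ℕ := (Finset.Icc 1 m).filter (fun k => a m (m + k) ≤ a m (m - k))
    with hS_def
  have h1S : (1 : ℕ) ∈ S := by
    rw [hS_def, Finset.mem_filter, Finset.mem_Icc]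
    refine ⟨⟨le_refl 1, hm⟩, ?_⟩
    have e1 : a m (m - 1) = a m m := by
      have := a_pred m hm (k := 0) (by omega)
      simpa [div_self (ne_of_gt hx)] using this
    have e2 : a m (m + 1) = a m m * ((m : ℝ) / ((m : ℝ) + 0 + 1)) := by
      have := a_plus_succ m 0
      simpa using this
    rw [e1, e2]
    have hlt : (m : ℝ) / ((m : ℝ) + 0 + 1) < 1 := by
      rw [div_lt_one (by positivity)]
      linarith
    nlinarith [a_pos m hm m]
  have hS_ne : S.Nonempty := ⟨1, h1S⟩
  set K := S.max' hS_ne with hK_def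
  have hK_mem : K ∈ S := S.max'_mem hS_ne
  have hK1 : 1 ≤ K := by
    rw [hS_def, Finset.mem_filter, Finset.mem_Icc] at hK_mem
    exact hK_mem.1.1
  have hKm : K ≤ m := by
    rw [hS_def, Finset.mem_filter, Finset.mem_Icc] at hK_mem
    exact hK_mem.1.2
  have hKa : a m (m + K) ≤ a m (m - K) := by
    rw [hS_def, Finset.mem_filter] at hK_mem
    exact hK_mem.2
  have hi : ∀ k, 1 ≤ k → k ≤ K → a m (m + k) ≤ a m (m - k) := by
    intro k hk1 hkK
    by_contra hcon
    push_neg at hcon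
    exact absurd (cross_iter m hm hk1 hcon K hkK hKm) (not_lt.mpr hKa)
  have hii : ∀ k, K < k → k ≤ m → a m (m - k) ≤ a m (m + k) := by
    intro k hKk hkm
    by_contra hcon
    push_neg at hcon
    have : k ∈ S := by
      rw [hS_def, Finset.mem_filter, Finset.mem_Icc]
      exact ⟨⟨by omega, hkm⟩, le_of_lt hcon⟩
    exact absurd (S.le_max' k this) (not_le.mpr hKk)
  -- nonnegativity of the paired sum
  have hL : 0 ≤ ∑ j ∈ Finset.range m,
      ((K : ℝ) - (j + 1)) * (a m (m - (j + 1)) - a m (j + (m + 1))) := by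
    apply Finset.sum_nonneg
    intro j hj
    rw [Finset.mem_range] at hj
    have hidx : j + (m + 1) = m + (j + 1) := by omega
    rw [hidx]
    rcases le_or_gt (j + 1) K with h | h
    · apply mul_nonneg
      · have : ((j : ℝ) + 1) ≤ (K : ℝ) := by exact_mod_cast h
        linarith
      · have := hi (j + 1) (by omega) h
        linarith
    · have h1 : (K : ℝ) < (j : ℝ) + 1 := by exact_mod_cast h
      have h2 := hii (j + 1) h (by omega)
      nlinarith [mul_nonneg (by linarith : (0:ℝ) ≤ (j:ℝ) + 1 - K)
        (by linarith : (0:ℝ) ≤ a m (m + (j + 1)) - a m (m - (j + 1)))]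
  -- T1 : the left finite weighted sum
  have hT1 : ∑ j ∈ Finset.range m, ((K : ℝ) - (j + 1)) * a m (m - (j + 1))
      = (K : ℝ) * A - (m : ℝ) * a m m := by
    have hrefl := Finset.sum_range_reflect
      (fun i => ((K : ℝ) - ((m - i : ℕ) : ℝ)) * a m i) m
    have hL1 : ∑ j ∈ Finset.range m, ((K : ℝ) - (j + 1)) * a m (m - (j + 1))
        = ∑ j ∈ Finset.range m,
            ((K : ℝ) - ((m - (m - 1 - j) : ℕ) : ℝ)) * a m (m - 1 - j) := by
      apply Finset.sum_congr rfl
      intro j hj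
      rw [Finset.mem_range] at hj
      have e1 : m - (m - 1 - j) = j + 1 := by omega
      have e2 : m - (j + 1) = m - 1 - j := by omega
      rw [e1, e2]
      push_cast
      ring
    rw [hL1, hrefl]
    have hmain : ∑ i ∈ Finset.range m, ((K : ℝ) - ((m - i : ℕ) : ℝ)) * a m i
        = (K : ℝ) * A - ∑ i ∈ Finset.range m, ((m : ℝ) - i) * a m i := by
      rw [hA_def, Finset.mul_sum, ← Finset.sum_sub_distrib]
      apply Finset.sum_congr rfl
      intro i hi2
      rw [Finset.mem_range] at hi2
      rw [cast_sub_of_le m (le_of_lt hi2)]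
      ring
    rw [hmain]
    have htel : ∑ i ∈ Finset.range m, ((m : ℝ) - i) * a m i = (m : ℝ) * a m m := by
      have := telescope m m
      rw [Finset.sum_range_succ] at this
      simpa using this
    rw [htel]
  -- f2 and its sum
  have hsumf2 : Summable (fun j : ℕ => ((K : ℝ) - (j + 1)) * a m (j + (m + 1))) := by
    have : (fun j : ℕ => ((K : ℝ) - (j + 1)) * a m (j + (m + 1)))
        = fun j : ℕ => (K : ℝ) * a m (j + (m + 1)) - ((j : ℝ) + 1) * a m (j + (m + 1)) := by
      funext j
      ring
    rw [this]
    exact (hB_sum.mul_left _).sub hsum2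
  have hT2 : ∑' j : ℕ, ((K : ℝ) - (j + 1)) * a m (j + (m + 1))
      = (K : ℝ) * B - (m : ℝ) * a m m := by
    have h1 : (fun j : ℕ => ((K : ℝ) - (j + 1)) * a m (j + (m + 1)))
        = fun j : ℕ => (K : ℝ) * a m (j + (m + 1)) - ((j : ℝ) + 1) * a m (j + (m + 1)) := by
      funext j
      ring
    rw [h1, Summable.tsum_sub (hB_sum.mul_left _) hsum2, hE2, tsum_mul_left, hB_def]
  -- split T2 at m
  have hsplit2 := Summable.sum_add_tsum_nat_add m hsumf2
  rw [hT2] at hsplit2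
  -- tail is negative
  have htail : ∑' j : ℕ, ((K : ℝ) - ((j + m : ℕ) + 1)) * a m ((j + m) + (m + 1)) < 0 := by
    have hsumtail := (summable_nat_add_iff m).2 hsumf2
    have hneg : ∀ j : ℕ, ((K : ℝ) - (((j + m : ℕ) : ℝ) + 1)) * a m ((j + m) + (m + 1)) < 0 := by
      intro j
      apply mul_neg_of_neg_of_pos
      · have h1 : (K : ℝ) ≤ (m : ℝ) := by exact_mod_cast hKm
        push_cast
        linarith
      · exact a_pos m hm _
    have hpos : 0 < ∑' j : ℕ,
        -(((K : ℝ) - (((j + m : ℕ) : ℝ) + 1)) * a m ((j + m) + (m + 1))) :=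
      Summable.tsum_pos hsumtail.neg (fun j => by linarith [hneg j]) 0 (by linarith [hneg 0])
    rw [tsum_neg] at hpos
    linarith
  -- combine
  have hfin : ∑ j ∈ Finset.range m, ((K : ℝ) - (j + 1)) * a m (j + (m + 1))
      ≤ (K : ℝ) * A - (m : ℝ) * a m m := by
    rw [← hT1]
    have hexp : ∑ j ∈ Finset.range m,
        ((K : ℝ) - (j + 1)) * (a m (m - (j + 1)) - a m (j + (m + 1)))
        = ∑ j ∈ Finset.range m, ((K : ℝ) - (j + 1)) * a m (m - (j + 1))
          - ∑ j ∈ Finset.range m, ((K : ℝ) - (j + 1)) * a m (j + (m + 1)) := by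
      rw [← Finset.sum_sub_distrib]
      apply Finset.sum_congr rfl
      intro j _
      ring
    rw [hexp] at hL
    linarith
  have hKB : (K : ℝ) * B - (m : ℝ) * a m m < (K : ℝ) * A - (m : ℝ) * a m m := by
    calc (K : ℝ) * B - (m : ℝ) * a m m
        = ∑ j ∈ Finset.range m, ((K : ℝ) - (j + 1)) * a m (j + (m + 1))
          + ∑' j : ℕ, ((K : ℝ) - ((j + m : ℕ) + 1)) * a m ((j + m) + (m + 1)) := by
          rw [← hsplit2]
      _ < ∑ j ∈ Finset.range m, ((K : ℝ) - (j + 1)) * a m (j + (m + 1)) := by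
          linarith
      _ ≤ (K : ℝ) * A - (m : ℝ) * a m m := hfin
  have hKpos : (0:ℝ) < (K : ℝ) := by exact_mod_cast hK1
  have : (K : ℝ) * B < (K : ℝ) * A := by linarith
  exact lt_of_mul_lt_mul_left this (le_of_lt hKpos)

end Stmt6Aux



theorem stmt6 (m : ℕ) (hm : 0 < m) :
    poissonMeasure (m : ℝ≥0) {n : ℕ | m + 1 ≤ n} < poissonMeasure (m : ℝ≥0) {n : ℕ | n ≤ m - 1} := by
  classical
  have hx : (0:ℝ) < (m:ℝ) := by exact_mod_cast hm
  set f : ℕ → ℝ := poissonPMFReal (m : ℝ≥0) with hf_def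
  have hfa : ∀ n, f n = Real.exp (-(m:ℝ)) * Stmt6Aux.a m n := by
    intro n
    rw [hf_def]
    unfold poissonPMFReal Stmt6Aux.a
    rw [mul_div_assoc]
    norm_num
  have hf_nonneg : ∀ n, 0 ≤ f n := fun n => poissonPMFReal_nonneg
  have hf_summable : Summable f := (poissonPMFRealSum (m : ℝ≥0)).summable
  have hmeas : ∀ s : Set ℕ, MeasurableSet s := fun s => trivial
  have happly : ∀ s : Set ℕ, poissonMeasure (m : ℝ≥0) s
      = ENNReal.ofReal (∑' n, s.indicator f n) := by
    intro s
    have h1 : poissonMeasure (m : ℝ≥0) s = ∑' n, s.indicator (poissonPMF (m : ℝ≥0)) n := by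
      rw [poissonMeasure, MeasureTheory.Measure.sum_apply _ (hmeas s)]
      refine tsum_congr fun n => ?_
      rw [MeasureTheory.Measure.smul_apply, MeasureTheory.Measure.dirac_apply' _ (hmeas s),
        smul_eq_mul]
      by_cases hn : n ∈ s <;> simp [hn, ← poissonPMFReal_ofReal_eq_poissonPMF, poissonPMFReal]
    rw [h1]
    have h2 : ∀ n, s.indicator (⇑(poissonPMF (m : ℝ≥0))) n
        = ENNReal.ofReal (s.indicator f n) := by
      intro n
      by_cases hn : n ∈ s
      · rw [Set.indicator_of_mem hn, Set.indicator_of_mem hn]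
        rfl
      · rw [Set.indicator_of_notMem hn, Set.indicator_of_notMem hn, ENNReal.ofReal_zero]
    rw [tsum_congr h2]
    exact (ENNReal.ofReal_tsum_of_nonneg
      (fun n => Set.indicator_nonneg (fun n _ => hf_nonneg n) n)
      (hf_summable.indicator s)).symm
  rw [happly, happly]
  -- compute the two real sums
  have hS1 : ∑' n, ({n : ℕ | m + 1 ≤ n}).indicator f n = ∑' j, f (j + (m + 1)) := by
    have hsum := (hf_summable.indicator {n : ℕ | m + 1 ≤ n})
    have := Summable.sum_add_tsum_nat_add (m + 1) hsum
    have hz : ∑ i ∈ Finset.range (m + 1), ({n : ℕ | m + 1 ≤ n}).indicator f i = 0 := by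
      apply Finset.sum_eq_zero
      intro i hi
      rw [Finset.mem_range] at hi
      apply Set.indicator_of_notMem
      simp only [Set.mem_setOf_eq]
      omega
    have hcong : ∀ j : ℕ, ({n : ℕ | m + 1 ≤ n}).indicator f (j + (m + 1)) = f (j + (m + 1)) := by
      intro j
      apply Set.indicator_of_mem
      simp only [Set.mem_setOf_eq]
      omega
    rw [hz, zero_add, tsum_congr hcong] at this
    exact this.symm
  have hS2 : ∑' n, ({n : ℕ | n ≤ m - 1}).indicator f n = ∑ k ∈ Finset.range m, f k := by
    rw [tsum_eq_sum (s := Finset.range m) ?h]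
    · apply Finset.sum_congr rfl
      intro k hk
      rw [Finset.mem_range] at hk
      apply Set.indicator_of_mem
      simp only [Set.mem_setOf_eq]
      omega
    case h =>
      intro n hn
      rw [Finset.mem_range] at hn
      apply Set.indicator_of_notMem
      simp only [Set.mem_setOf_eq]
      omega
  rw [hS1, hS2]
  have hcore := Stmt6Aux.core m hm
  have hexp : (0:ℝ) < Real.exp (-(m:ℝ)) := Real.exp_pos _
  have hlt : ∑' j, f (j + (m + 1)) < ∑ k ∈ Finset.range m, f k := by
    have h1 : ∑' j, f (j + (m + 1))
        = Real.exp (-(m:ℝ)) * ∑' j, Stmt6Aux.a m (j + (m + 1)) := by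
      rw [← tsum_mul_left]
      exact tsum_congr fun j => hfa _
    have h2 : ∑ k ∈ Finset.range m, f k
        = Real.exp (-(m:ℝ)) * ∑ k ∈ Finset.range m, Stmt6Aux.a m k := by
      rw [Finset.mul_sum]
      exact Finset.sum_congr rfl fun k _ => hfa k
    rw [h1, h2]
    exact mul_lt_mul_of_pos_left hcore hexp
  have hpos : (0:ℝ) < ∑ k ∈ Finset.range m, f k := by
    apply Finset.sum_pos
    · intro k _
      rw [hfa k]
      exact mul_pos hexp (Stmt6Aux.a_pos m hm k)
    · exact ⟨0, Finset.mem_range.mpr hm⟩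
  exact (ENNReal.ofReal_lt_ofReal_iff hpos).mpr hlt
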